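/- Let z̃ : ℝ² → ℝ be differentiable and strictly positive at (x, y), let f̃ > 0 and (x₀, y₀) ∈ ℝ², and let 𝐱(u, v) = z̃(u, v)·((u − x₀)/f̃, (v − y₀)/f̃, 1). Set z = log ∘ z̃, x̃ = x − x₀, ỹ = y − y₀, d = √( f̃²((∂ₓz)² + (∂_y z)²) + (1 + x̃·∂ₓz + ỹ·∂_y z)² ) evaluated at (x, y), and n = (1/d)·( f̃·∂ₓz(x,y), f̃·∂_y z(x,y), −(1 + x̃·∂ₓz(x,y) + ỹ·∂_y z(x,y)) ). Then n is a unit vector orthogonal to both tangent vectors 𝐱ₓ(x,y) and 𝐱_y(x,y), and n is a negative scalar multiple of 𝐱ₓ(x,y) × 𝐱_y(x,y) (namely n = −(f̃²/(z̃(x,y)²·d))·(𝐱ₓ(x,y) × 𝐱_y(x,y))). -/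

import Mathlib

open scoped RealInnerProductSpace

/-- Let `z̃ : ℝ² → ℝ` be differentiable and strictly positive at `(x, y)`,
let `f̃ > 0` and `(x₀, y₀) ∈ ℝ²`, and let
`𝐱(u, v) = z̃(u, v)·((u − x₀)/f̃, (v − y₀)/f̃, 1)`. Set `z = log ∘ z̃`, `x̃ = x − x₀`,
`ỹ = y − y₀`, `d = √(f̃²((∂ₓz)² + (∂_y z)²) + (1 + x̃·∂ₓz + ỹ·∂_y z)²)` at `(x, y)`, and
`n = (1/d)·(f̃·∂ₓz, f̃·∂_y z, −(1 + x̃·∂ₓz + ỹ·∂_y z))`. Then `n` is a unit vector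
orthogonal to both tangent vectors `𝐱ₓ` and `𝐱_y`, and
`n = −(f̃²/(z̃(x,y)²·d))·(𝐱ₓ × 𝐱_y)`.
(Here `zt = z̃`, `ft = f̃`, `xt = x̃`, `yt = ỹ`.) -/
private lemma perspective_aux_pos (ft zx zy xt yt : ℝ) (hft : 0 < ft) :
    0 < ft ^ 2 * (zx ^ 2 + zy ^ 2) + (1 + xt * zx + yt * zy) ^ 2 := by
  rcases eq_or_ne zx 0 with h1 | h1
  · rcases eq_or_ne zy 0 with h2 | h2
    · simp [h1, h2]
    · have : 0 < ft ^ 2 * (zx ^ 2 + zy ^ 2) := by positivity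
      nlinarith [sq_nonneg (1 + xt * zx + yt * zy)]
  · have : 0 < ft ^ 2 * (zx ^ 2 + zy ^ 2) := by positivity
    nlinarith [sq_nonneg (1 + xt * zx + yt * zy)]

private lemma perspective_aux_cross (ft Z a1 a2 u v d : ℝ) (hft : ft ≠ 0) (hZ : Z ≠ 0)
    (hd : d ≠ 0) :
    (1 / d * (ft * (Z⁻¹ * a1)) =
      -(ft ^ 2 / (Z ^ 2 * d)) * (v / ft * a1 * a2 - a1 * (Z * ft⁻¹ + v / ft * a2))) ∧
    (1 / d * (ft * (Z⁻¹ * a2)) =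
      -(ft ^ 2 / (Z ^ 2 * d)) * (a1 * (u / ft * a2) - (Z * ft⁻¹ + u / ft * a1) * a2)) ∧
    (1 / d * -(1 + u * (Z⁻¹ * a1) + v * (Z⁻¹ * a2)) =
      -(ft ^ 2 / (Z ^ 2 * d)) *
        ((Z * ft⁻¹ + u / ft * a1) * (Z * ft⁻¹ + v / ft * a2) - v / ft * a1 * (u / ft * a2))) := by
  refine ⟨?_, ?_, ?_⟩ <;> field_simp <;> ring

theorem perspective_normal_field (zt : ℝ × ℝ → ℝ) (x y x₀ y₀ ft : ℝ) (hft : 0 < ft)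
    (hz : DifferentiableAt ℝ zt (x, y)) (hpos : 0 < zt (x, y))
    (X : ℝ × ℝ → EuclideanSpace ℝ (Fin 3))
    (hX : X = fun p => (WithLp.equiv 2 (Fin 3 → ℝ)).symm
      ![zt p * ((p.1 - x₀) / ft), zt p * ((p.2 - y₀) / ft), zt p])
    (Xx Xy : EuclideanSpace ℝ (Fin 3))
    (hXx : Xx = fderiv ℝ X (x, y) (1, 0)) (hXy : Xy = fderiv ℝ X (x, y) (0, 1))
    (z : ℝ × ℝ → ℝ) (hzdef : z = Real.log ∘ zt)
    (zx zy : ℝ) (hzx : zx = fderiv ℝ z (x, y) (1, 0)) (hzy : zy = fderiv ℝ z (x, y) (0, 1))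
    (xt yt : ℝ) (hxt : xt = x - x₀) (hyt : yt = y - y₀)
    (d : ℝ) (hd : d = Real.sqrt (ft ^ 2 * (zx ^ 2 + zy ^ 2) + (1 + xt * zx + yt * zy) ^ 2))
    (n : EuclideanSpace ℝ (Fin 3))
    (hn : n = (1 / d) • (WithLp.equiv 2 (Fin 3 → ℝ)).symm
      ![ft * zx, ft * zy, -(1 + xt * zx + yt * zy)]) :
    ‖n‖ = 1 ∧ ⟪n, Xx⟫ = 0 ∧ ⟪n, Xy⟫ = 0 ∧
    n = (-(ft ^ 2 / (zt (x, y) ^ 2 * d))) •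
      (WithLp.equiv 2 (Fin 3 → ℝ)).symm (crossProduct Xx Xy) := by
  have hftne : ft ≠ 0 := ne_of_gt hft
  have hZne : zt (x, y) ≠ 0 := ne_of_gt hpos
  set Z := zt (x, y) with hZdef
  set A := fderiv ℝ zt (x, y) with hA
  set a1 := A (1, 0) with ha1
  set a2 := A (0, 1) with ha2
  -- derivative of z = log ∘ zt
  have hlog : HasFDerivAt z (Z⁻¹ • A) (x, y) := by
    rw [hzdef]
    exact (Real.hasDerivAt_log hZne).comp_hasFDerivAt _ hz.hasFDerivAt
  have hzx' : zx = Z⁻¹ * a1 := by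
    rw [hzx, hlog.fderiv]; simp [ha1]
  have hzy' : zy = Z⁻¹ * a2 := by
    rw [hzy, hlog.fderiv]; simp [ha2]
  -- component derivatives of X
  set P := ContinuousLinearMap.fst ℝ ℝ ℝ with hP
  set Q := ContinuousLinearMap.snd ℝ ℝ ℝ with hQ
  have hg0 : HasFDerivAt (fun p : ℝ × ℝ => (p.1 - x₀) / ft) (ft⁻¹ • P) (x, y) := by
    simpa [div_eq_mul_inv, smul_smul] using
      ((hasFDerivAt_fst (p := ((x, y) : ℝ × ℝ))).sub_const x₀).mul_const ft⁻¹
  have hg1 : HasFDerivAt (fun p : ℝ × ℝ => (p.2 - y₀) / ft) (ft⁻¹ • Q) (x, y) := by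
    simpa [div_eq_mul_inv, smul_smul] using
      ((hasFDerivAt_snd (p := ((x, y) : ℝ × ℝ))).sub_const y₀).mul_const ft⁻¹
  set L0 : ℝ × ℝ →L[ℝ] ℝ := Z • (ft⁻¹ • P) + ((x - x₀) / ft) • A with hL0
  set L1 : ℝ × ℝ →L[ℝ] ℝ := Z • (ft⁻¹ • Q) + ((y - y₀) / ft) • A with hL1
  have h0 : HasFDerivAt (fun p : ℝ × ℝ => zt p * ((p.1 - x₀) / ft)) L0 (x, y) :=
    hz.hasFDerivAt.mul hg0
  have h1 : HasFDerivAt (fun p : ℝ × ℝ => zt p * ((p.2 - y₀) / ft)) L1 (x, y) :=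
    hz.hasFDerivAt.mul hg1
  -- assemble the derivative of X
  set F : ℝ × ℝ →L[ℝ] (Fin 3 → ℝ) := ContinuousLinearMap.pi ![L0, L1, A] with hF
  set e := (EuclideanSpace.equiv (Fin 3) ℝ).symm.toContinuousLinearMap with he
  have hXder : HasFDerivAt X (e.comp F) (x, y) := by
    have hY : HasFDerivAt
        (fun p : ℝ × ℝ => (![zt p * ((p.1 - x₀) / ft), zt p * ((p.2 - y₀) / ft), zt p]
          : Fin 3 → ℝ)) F (x, y) := by
      apply hasFDerivAt_pi''
      intro i
      fin_cases i
      · exact h0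
      · exact h1
      · exact hz.hasFDerivAt
    have : X = e ∘ (fun p : ℝ × ℝ =>
        (![zt p * ((p.1 - x₀) / ft), zt p * ((p.2 - y₀) / ft), zt p] : Fin 3 → ℝ)) := by
      rw [hX]; rfl
    rw [this]
    exact e.hasFDerivAt.comp (x, y) hY
  have hXxv : Xx = (WithLp.equiv 2 (Fin 3 → ℝ)).symm
      ![Z * ft⁻¹ + (x - x₀) / ft * a1, (y - y₀) / ft * a1, a1] := by
    rw [hXx, hXder.fderiv]
    refine PiLp.ext fun i => ?_
    fin_cases i
    · show L0 ((1 : ℝ), (0 : ℝ)) = _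
      simp [hL0, hP, ha1]
    · show L1 ((1 : ℝ), (0 : ℝ)) = _
      simp [hL1, hQ, ha1]
    · show A ((1 : ℝ), (0 : ℝ)) = _
      simp [ha1]
  have hXyv : Xy = (WithLp.equiv 2 (Fin 3 → ℝ)).symm
      ![(x - x₀) / ft * a2, Z * ft⁻¹ + (y - y₀) / ft * a2, a2] := by
    rw [hXy, hXder.fderiv]
    refine PiLp.ext fun i => ?_
    fin_cases i
    · show L0 ((0 : ℝ), (1 : ℝ)) = _
      simp [hL0, hP, ha2]
    · show L1 ((0 : ℝ), (1 : ℝ)) = _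
      simp [hL1, hQ, ha2]
    · show A ((0 : ℝ), (1 : ℝ)) = _
      simp [ha2]
  -- positivity of d
  set S := ft ^ 2 * (zx ^ 2 + zy ^ 2) + (1 + xt * zx + yt * zy) ^ 2 with hS
  have hSpos : 0 < S := perspective_aux_pos ft zx zy xt yt hft
  have hdpos : 0 < d := by rw [hd]; exact Real.sqrt_pos.2 hSpos
  have hdne : d ≠ 0 := ne_of_gt hdpos
  have hdsq : d ^ 2 = S := by rw [hd]; exact Real.sq_sqrt hSpos.le
  refine ⟨?_, ?_, ?_, ?_⟩
  · rw [EuclideanSpace.norm_eq]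
    have hsum : ∑ i, ‖n i‖ ^ 2 = 1 := by
      simp only [hn, PiLp.smul_apply, WithLp.equiv_symm_apply, WithLp.ofLp_toLp, PiLp.toLp_apply, smul_eq_mul,
        Fin.sum_univ_three, Real.norm_eq_abs, sq_abs]
      have h : (1 / d * (ft * zx)) ^ 2 + (1 / d * (ft * zy)) ^ 2 +
          (1 / d * -(1 + xt * zx + yt * zy)) ^ 2 = S / d ^ 2 := by
        rw [hS]; field_simp
      simp only [Matrix.cons_val_zero, Matrix.cons_val_one, Matrix.head_cons,
        Matrix.cons_val_two, Matrix.tail_cons]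
      rw [h, hdsq]
      field_simp
    rw [hsum, Real.sqrt_one]
  · rw [hn, hXxv]
    simp only [inner_smul_left, PiLp.inner_apply, WithLp.equiv_symm_apply, WithLp.ofLp_toLp, PiLp.toLp_apply,
      RCLike.inner_apply, conj_trivial, Fin.sum_univ_three,
      Matrix.cons_val_zero, Matrix.cons_val_one, Matrix.head_cons,
      Matrix.cons_val_two, Matrix.tail_cons]
    rw [hzx', hzy', hxt, hyt]
    field_simp
    ring
  · rw [hn, hXyv]
    simp only [inner_smul_left, PiLp.inner_apply, WithLp.equiv_symm_apply, WithLp.ofLp_toLp, PiLp.toLp_apply,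
      RCLike.inner_apply, conj_trivial, Fin.sum_univ_three,
      Matrix.cons_val_zero, Matrix.cons_val_one, Matrix.head_cons,
      Matrix.cons_val_two, Matrix.tail_cons]
    rw [hzx', hzy', hxt, hyt]
    field_simp
    ring
  · rw [hn, hXxv, hXyv]
    simp only [WithLp.equiv_symm_apply, ← WithLp.toLp_smul]
    apply congrArg
    rw [cross_apply, Matrix.smul_vec3, Matrix.smul_vec3]
    obtain ⟨e0, e1, e2⟩ :=
      perspective_aux_cross ft Z a1 a2 (x - x₀) (y - y₀) d hftne hZne hdne
    refine Matrix.vec3_eq ?_ ?_ ?_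
    · simp only [WithLp.equiv_symm_apply, WithLp.ofLp_toLp, PiLp.toLp_apply, Matrix.cons_val_zero, Matrix.cons_val_one,
        Matrix.head_cons, Matrix.cons_val_two, Matrix.tail_cons, smul_eq_mul]
      simp only [hzx', hzy', hxt, hyt]
      exact e0
    · simp only [WithLp.equiv_symm_apply, WithLp.ofLp_toLp, PiLp.toLp_apply, Matrix.cons_val_zero, Matrix.cons_val_one,
        Matrix.head_cons, Matrix.cons_val_two, Matrix.tail_cons, smul_eq_mul]
      simp only [hzx', hzy', hxt, hyt]
      exact e1
    · simp only [WithLp.equiv_symm_apply, WithLp.ofLp_toLp, PiLp.toLp_apply, Matrix.cons_val_zero, Matrix.cons_val_one,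
        Matrix.head_cons, Matrix.cons_val_two, Matrix.tail_cons, smul_eq_mul]
      simp only [hzx', hzy', hxt, hyt]
      exact e2
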